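/- arXiv:2407.15900 — 2 statements merged into one kernel-verified Lean document; each statement's English description precedes it below -/
import Mathlib

section
/- Let λ > 0 and let F_λ be the exponential cumulative distribution function with rate λ, i.e. F_λ(x) = 1 − e^{−λx} for x ≥ 0 and F_λ(x) = 0 for x < 0. Then for every threshold τ ≥ 0 and observation y ∈ ℝ, writing v = max(y, τ): twCRPS_τ(F_λ, y) = v − τ + (2/λ)(e^{−λv} − e^{−λτ}) + (1/(2λ)) e^{−2λτ}. -/
open MeasureTheory Set

/-- Threshold-weighted CRPS: `twCRPS_τ(F, y) = ∫_τ^∞ (F(z) − 𝟙{z ≥ y})² dz`. -/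
noncomputable def twCRPS (F : ℝ → ℝ) (τ y : ℝ) : ℝ :=
  ∫ z in Set.Ioi τ, (F z - if y ≤ z then (1 : ℝ) else 0) ^ 2

/-- Exponential CDF with rate `λ`. -/
noncomputable def expCDF (l : ℝ) (x : ℝ) : ℝ :=
  if x < 0 then 0 else 1 - Real.exp (-l * x)

lemma expDeriv (c x : ℝ) : HasDerivAt (fun z : ℝ => Real.exp (c * z)) (c * Real.exp (c * x)) x := by
  simpa [mul_comm] using ((hasDerivAt_id x).const_mul c).exp

lemma exp_two_mul' (a z : ℝ) : Real.exp (2 * a * z) = Real.exp (a * z) * Real.exp (a * z) := by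
  rw [← Real.exp_add]; ring_nf

theorem twCRPS_exponential (l : ℝ) (hl : 0 < l) (τ y : ℝ) (hτ : 0 ≤ τ) :
    twCRPS (expCDF l) τ y =
      max y τ - τ
        + 2 / l * (Real.exp (-l * max y τ) - Real.exp (-l * τ))
        + 1 / (2 * l) * Real.exp (-2 * l * τ) := by
  set v := max y τ with hv
  have hτv : τ ≤ v := le_max_right _ _
  have hyv : y ≤ v := le_max_left _ _
  have hln : l ≠ 0 := hl.ne'
  have hsq : ∀ z : ℝ, Real.exp (-2 * l * z) = Real.exp (-l * z) * Real.exp (-l * z) := by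
    intro z
    have := exp_two_mul' (-l) z
    rw [show 2 * -l * z = -2 * l * z by ring] at this
    exact this
  -- tail integral
  have hB : ∫ z in Ioi v, Real.exp (-2 * l * z) = 1 / (2 * l) * Real.exp (-2 * l * v) := by
    have hderiv : ∀ x ∈ Ici v, HasDerivAt (fun z => -(1 / (2 * l)) * Real.exp (-2 * l * z))
        (Real.exp (-2 * l * x)) x := by
      intro x _
      have h := (expDeriv (-2 * l) x).const_mul (-(1 / (2 * l)))
      refine h.congr_deriv ?_
      field_simp
    have hint : IntegrableOn (fun z => Real.exp (-2 * l * z)) (Ioi v) := by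
      have h := exp_neg_integrableOn_Ioi v (by positivity : (0:ℝ) < 2 * l)
      refine h.congr_fun (fun x _ => ?_) measurableSet_Ioi
      ring_nf
    have htend : Filter.Tendsto (fun z => -(1 / (2 * l)) * Real.exp (-2 * l * z))
        Filter.atTop (nhds 0) := by
      have h1 : Filter.Tendsto (fun z : ℝ => Real.exp (-2 * l * z)) Filter.atTop (nhds 0) :=
        Real.tendsto_exp_atBot.comp
          (Filter.Tendsto.const_mul_atTop_of_neg (by linarith : -2 * l < 0) Filter.tendsto_id)
      simpa using h1.const_mul (-(1 / (2 * l)))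
    rw [integral_Ioi_of_hasDerivAt_of_tendsto' hderiv hint htend]
    ring
  -- middle integral
  have hA : ∫ z in Ioc τ v, (1 - Real.exp (-l * z)) ^ 2
      = (v - τ) + 2 / l * (Real.exp (-l * v) - Real.exp (-l * τ))
        - 1 / (2 * l) * (Real.exp (-2 * l * v) - Real.exp (-2 * l * τ)) := by
    rw [← intervalIntegral.integral_of_le hτv]
    have hderiv : ∀ x ∈ uIcc τ v, HasDerivAt
        (fun z => z + 2 / l * Real.exp (-l * z) - 1 / (2 * l) * Real.exp (-2 * l * z))
        ((1 - Real.exp (-l * x)) ^ 2) x := by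
      intro x _
      have h1 := (expDeriv (-l) x).const_mul (2 / l)
      have h2 := (expDeriv (-2 * l) x).const_mul (1 / (2 * l))
      have h := ((hasDerivAt_id x).add h1).sub h2
      refine h.congr_deriv ?_
      rw [hsq x]
      field_simp
      ring
    have hcont : IntervalIntegrable (fun x => (1 - Real.exp (-l * x)) ^ 2) volume τ v := by
      apply Continuous.intervalIntegrable
      fun_prop
    rw [intervalIntegral.integral_eq_sub_of_hasDerivAt hderiv hcont]
    ring
  -- integrand rewrites
  have hsplit : Ioi τ = Ioc τ v ∪ Ioi v := (Ioc_union_Ioi_eq_Ioi hτv).symm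
  have hmeq : (fun z => (expCDF l z - if y ≤ z then (1:ℝ) else 0) ^ 2)
      =ᵐ[volume.restrict (Ioc τ v)] (fun z => (1 - Real.exp (-l * z)) ^ 2) := by
    have hnull : (volume.restrict (Ioc τ v)) {y} = 0 :=
      le_antisymm (le_trans (Measure.restrict_le_self _) (le_of_eq (measure_singleton y)))
        zero_le
    filter_upwards [ae_restrict_mem measurableSet_Ioc,
      measure_eq_zero_iff_ae_notMem.mp hnull] with z hz hzy
    have hz0 : ¬ z < 0 := by push_neg; linarith [hz.1]
    have hzy' : ¬ y ≤ z := by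
      intro hyz
      rcases max_cases y τ with ⟨h1, h2⟩ | ⟨h1, h2⟩
      · exact hzy (le_antisymm (by rw [hv, h1] at hz; exact hz.2) hyz)
      · rw [hv, h1] at hz; linarith [hz.1, hz.2]
    simp [expCDF, hz0, hzy']
  have hmeq2 : EqOn (fun z => (expCDF l z - if y ≤ z then (1:ℝ) else 0) ^ 2)
      (fun z => Real.exp (-2 * l * z)) (Ioi v) := by
    intro z hz
    have hz0 : ¬ z < 0 := by push_neg; linarith [hz.out]
    have hyz : y ≤ z := le_of_lt (lt_of_le_of_lt hyv hz)
    simp only [expCDF, if_neg hz0, if_pos hyz]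
    rw [hsq z]
    ring
  have hint1 : IntegrableOn (fun z => (expCDF l z - if y ≤ z then (1:ℝ) else 0) ^ 2)
      (Ioc τ v) := by
    rw [IntegrableOn, integrable_congr hmeq]
    exact (Continuous.integrableOn_Ioc (by fun_prop))
  have hint2 : IntegrableOn (fun z => (expCDF l z - if y ≤ z then (1:ℝ) else 0) ^ 2)
      (Ioi v) := by
    rw [IntegrableOn, integrable_congr (Filter.EventuallyEq.filter_mono
      (Filter.Eventually.of_forall (fun z => rfl)) le_rfl)]
    refine (integrableOn_congr_fun hmeq2 measurableSet_Ioi).mpr ?_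
    have h := exp_neg_integrableOn_Ioi v (by positivity : (0:ℝ) < 2 * l)
    refine h.congr_fun (fun x _ => ?_) measurableSet_Ioi
    ring_nf
  rw [twCRPS, hsplit,
    setIntegral_union (Ioc_disjoint_Ioi le_rfl) measurableSet_Ioi hint1 hint2,
    integral_congr_ae hmeq, setIntegral_congr_fun measurableSet_Ioi hmeq2, hA, hB]
  ring
end

section
/- Let μ ∈ ℝ and σ > 0, and let F_{μ,σ} denote the log-normal cumulative distribution function, F_{μ,σ}(x) = Φ((log x − μ)/σ) for x > 0 and F_{μ,σ}(x) = 0 for x ≤ 0, where Φ is the standard normal CDF. Define I(α, β) = ∫_{α}^{∞} φ(u) Φ(u + β) du, where φ is the standard normal density. Then for every threshold τ > 0 and observation y > 0, writing v = max(y, τ): twCRPS_τ(F_{μ,σ}, y) = −τ F_{μ,σ}(τ)² + v (2 F_{μ,σ}(v) − 1) + 2 e^{μ + σ²/2} (1 − F_{μ+σ²,σ}(v) − I((log τ − μ)/σ − σ, σ)). -/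
open MeasureTheory Set

/-- Standard normal density `φ(x) = (1/√(2π)) e^{−x²/2}`. -/
noncomputable def stdNormalPDF (x : ℝ) : ℝ :=
  (Real.sqrt (2 * Real.pi))⁻¹ * Real.exp (-x ^ 2 / 2)

/-- Standard normal CDF `Φ(x) = ∫_{-∞}^x φ(u) du`. -/
noncomputable def stdNormalCDF (x : ℝ) : ℝ :=
  ∫ u in Set.Iic x, stdNormalPDF u

/-- Log-normal CDF with log-location `μ` and log-scale `σ`. -/
noncomputable def logNormalCDF (μ σ : ℝ) (x : ℝ) : ℝ :=
  if 0 < x then stdNormalCDF ((Real.log x - μ) / σ) else 0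

/-- The integral function `I(α, β) = ∫_α^∞ φ(u) Φ(u + β) du`. -/
noncomputable def intI (α β : ℝ) : ℝ :=
  ∫ u in Set.Ioi α, stdNormalPDF u * stdNormalCDF (u + β)

open Filter Topology

lemma pdf_nonneg (x : ℝ) : 0 ≤ stdNormalPDF x := by
  unfold stdNormalPDF
  positivity

lemma pdf_continuous : Continuous stdNormalPDF := by
  unfold stdNormalPDF
  fun_prop

lemma exp_eq : (fun x : ℝ => Real.exp (-x^2/2)) = fun x : ℝ => Real.exp (-(2⁻¹ : ℝ) * x ^ 2) := by
  funext x; ring_nf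

lemma pdf_integrable : Integrable stdNormalPDF := by
  unfold stdNormalPDF
  refine Integrable.const_mul ?_ _
  rw [exp_eq]
  exact integrable_exp_neg_mul_sq (by norm_num)

lemma pdf_integral : ∫ x, stdNormalPDF x = 1 := by
  unfold stdNormalPDF
  rw [integral_const_mul, exp_eq, integral_gaussian]
  rw [show Real.pi / 2⁻¹ = 2 * Real.pi by ring]
  rw [inv_mul_cancel₀ (by positivity)]

/-- shift identity -/
lemma pdf_shift (c x : ℝ) :
    stdNormalPDF x * Real.exp (c * x) = Real.exp (c ^ 2 / 2) * stdNormalPDF (x - c) := by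
  unfold stdNormalPDF
  rw [mul_assoc, ← Real.exp_add, mul_comm (Real.exp _), mul_assoc, ← Real.exp_add]
  ring_nf

lemma pdf_shift_integrable (c : ℝ) : Integrable (fun x => stdNormalPDF (x - c)) :=
  pdf_integrable.comp_sub_right c

lemma pdf_shift_integral (c : ℝ) : ∫ x, stdNormalPDF (x - c) = 1 := by
  rw [integral_sub_right_eq_self stdNormalPDF c]; exact pdf_integral

lemma pdf_mul_exp_integrable (c : ℝ) : Integrable (fun x => stdNormalPDF x * Real.exp (c * x)) := by
  simp_rw [pdf_shift]
  exact (pdf_shift_integrable c).const_mul _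

lemma cdf_nonneg (x : ℝ) : 0 ≤ stdNormalCDF x :=
  setIntegral_nonneg measurableSet_Iic (fun u _ => pdf_nonneg u)

lemma cdf_le_one (x : ℝ) : stdNormalCDF x ≤ 1 := by
  rw [← pdf_integral]
  exact setIntegral_le_integral pdf_integrable (Eventually.of_forall pdf_nonneg)

lemma integral_Ioi_pdf (x : ℝ) : ∫ u in Set.Ioi x, stdNormalPDF u = 1 - stdNormalCDF x := by
  have := intervalIntegral.integral_Iic_add_Ioi (b := x) pdf_integrable.integrableOn pdf_integrable.integrableOn
  rw [pdf_integral] at this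
  unfold stdNormalCDF
  linarith

lemma cdf_hasDeriv (x : ℝ) : HasDerivAt stdNormalCDF (stdNormalPDF x) x := by
  have hrepr : stdNormalCDF = fun u => stdNormalCDF 0 + ∫ t in (0:ℝ)..u, stdNormalPDF t := by
    funext u
    rw [← intervalIntegral.integral_Iic_sub_Iic pdf_integrable.integrableOn
      pdf_integrable.integrableOn]
    unfold stdNormalCDF; ring
  rw [hrepr]
  exact (intervalIntegral.integral_hasDerivAt_right
    pdf_integrable.intervalIntegrable
    pdf_continuous.aestronglyMeasurable.stronglyMeasurableAtFilter
    pdf_continuous.continuousAt).const_add _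

lemma cdf_continuous : Continuous stdNormalCDF :=
  continuous_iff_continuousAt.2 fun x => (cdf_hasDeriv x).continuousAt

lemma cdf_tail (c x : ℝ) (hc : 0 < c) :
    1 - stdNormalCDF x ≤ Real.exp (c ^ 2 / 2) * Real.exp (-(c * x)) := by
  rw [← integral_Ioi_pdf]
  have h1 : ∫ u in Set.Ioi x, stdNormalPDF u ≤
      ∫ u in Set.Ioi x, stdNormalPDF u * Real.exp (c * (u - x)) := by
    refine setIntegral_mono_on pdf_integrable.integrableOn ?_ measurableSet_Ioi ?_
    · have : Integrable (fun u => stdNormalPDF u * (Real.exp (c * u) * Real.exp (-(c*x)))) :=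
        ((pdf_mul_exp_integrable c).mul_const _).congr (Eventually.of_forall fun u => by ring)
      refine this.integrableOn.congr_fun (fun u _ => by rw [mul_sub, Real.exp_sub, div_eq_mul_inv, Real.exp_neg]) measurableSet_Ioi
    · intro u hu
      nth_rewrite 1 [← mul_one (stdNormalPDF u)]
      exact mul_le_mul_of_nonneg_left (Real.one_le_exp (by nlinarith [hu.out])) (pdf_nonneg u)
  have h2 : ∫ u in Set.Ioi x, stdNormalPDF u * Real.exp (c * (u - x)) ≤
      Real.exp (c^2/2) * Real.exp (-(c * x)) := by
    have heq : ∀ u : ℝ, stdNormalPDF u * Real.exp (c * (u - x)) =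
        Real.exp (-(c*x)) * (Real.exp (c^2/2) * stdNormalPDF (u - c)) := by
      intro u
      rw [mul_sub, Real.exp_sub, ← pdf_shift]
      rw [Real.exp_neg]; field_simp
    simp_rw [heq]
    rw [show Real.exp (c^2/2) * Real.exp (-(c*x)) = Real.exp (-(c*x)) * (Real.exp (c^2/2) * 1) by ring]
    rw [← pdf_shift_integral c]
    rw [integral_const_mul, integral_const_mul]
    refine mul_le_mul_of_nonneg_left ?_ (Real.exp_nonneg _)
    refine mul_le_mul_of_nonneg_left ?_ (Real.exp_nonneg _)
    exact setIntegral_le_integral (pdf_shift_integrable c)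
      (Eventually.of_forall fun u => pdf_nonneg _)
  linarith

lemma lnc_eq {μ σ x : ℝ} (h : 0 < x) :
    logNormalCDF μ σ x = stdNormalCDF ((Real.log x - μ) / σ) := if_pos h

lemma lnc_nonneg (μ σ x : ℝ) : 0 ≤ logNormalCDF μ σ x := by
  unfold logNormalCDF; split
  · exact cdf_nonneg _
  · exact le_refl 0

lemma lnc_le_one (μ σ x : ℝ) : logNormalCDF μ σ x ≤ 1 := by
  unfold logNormalCDF; split
  · exact cdf_le_one _
  · norm_num

lemma lnc_hasDeriv (μ σ : ℝ) (hσ : 0 < σ) {x : ℝ} (hx : 0 < x) :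
    HasDerivAt (logNormalCDF μ σ) (stdNormalPDF ((Real.log x - μ) / σ) / (σ * x)) x := by
  have hinner : HasDerivAt (fun t => (Real.log t - μ) / σ) (x⁻¹ / σ) x :=
    ((Real.hasDerivAt_log hx.ne').sub_const μ).div_const σ
  have hcomp := (cdf_hasDeriv ((Real.log x - μ) / σ)).comp x hinner
  have heq : logNormalCDF μ σ =ᶠ[nhds x] fun t => stdNormalCDF ((Real.log t - μ) / σ) := by
    filter_upwards [Ioi_mem_nhds hx] with t ht
    exact lnc_eq ht
  have hval : stdNormalPDF ((Real.log x - μ) / σ) * (x⁻¹ / σ)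
      = stdNormalPDF ((Real.log x - μ) / σ) / (σ * x) := by
    ring
  rw [← hval]
  exact hcomp.congr_of_eventuallyEq heq

lemma lnc_tail (μ σ : ℝ) (hσ : 0 < σ) {x : ℝ} (hx : 0 < x) :
    1 - logNormalCDF μ σ x ≤ Real.exp (μ + σ ^ 2 / 2) / x := by
  rw [lnc_eq hx]
  have h := cdf_tail σ ((Real.log x - μ) / σ) hσ
  have : Real.exp (σ ^ 2 / 2) * Real.exp (-(σ * ((Real.log x - μ) / σ)))
      = Real.exp (μ + σ ^ 2 / 2) / x := by
    rw [← Real.exp_add]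
    have : -(σ * ((Real.log x - μ) / σ)) = μ - Real.log x := by field_simp; ring
    rw [this, show σ ^ 2 / 2 + (μ - Real.log x) = (μ + σ ^ 2 / 2) + (- Real.log x) by ring,
      Real.exp_add, Real.exp_neg, Real.exp_log hx, ← div_eq_mul_inv]
  exact h.trans this.le

lemma intI_integrand_integrable (β : ℝ) :
    Integrable (fun u => stdNormalPDF u * stdNormalCDF (u + β)) := by
  refine pdf_integrable.mono' ?_ (Eventually.of_forall fun u => ?_)
  · exact (pdf_continuous.mul (cdf_continuous.comp (continuous_id.add continuous_const))).aestronglyMeasurable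
  · rw [Real.norm_eq_abs, abs_of_nonneg (mul_nonneg (pdf_nonneg u) (cdf_nonneg _))]
    nth_rewrite 2 [← mul_one (stdNormalPDF u)]
    exact mul_le_mul_of_nonneg_left (cdf_le_one _) (pdf_nonneg u)

lemma intI_nonneg (α β : ℝ) : 0 ≤ intI α β :=
  setIntegral_nonneg measurableSet_Ioi fun u _ => mul_nonneg (pdf_nonneg u) (cdf_nonneg _)

lemma intI_le (α β : ℝ) : intI α β ≤ 1 - stdNormalCDF α := by
  rw [← integral_Ioi_pdf]
  refine setIntegral_mono_on (intI_integrand_integrable β).integrableOn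
    pdf_integrable.integrableOn measurableSet_Ioi fun u _ => ?_
  nth_rewrite 2 [← mul_one (stdNormalPDF u)]
  exact mul_le_mul_of_nonneg_left (cdf_le_one _) (pdf_nonneg u)

lemma intI_hasDeriv (β α : ℝ) :
    HasDerivAt (fun a => intI a β) (-(stdNormalPDF α * stdNormalCDF (α + β))) α := by
  have hint := intI_integrand_integrable β
  have hrepr : (fun a => intI a β) = fun a =>
      (∫ u, stdNormalPDF u * stdNormalCDF (u + β)) -
        ((∫ u in Set.Iic (0:ℝ), stdNormalPDF u * stdNormalCDF (u + β)) +
          ∫ t in (0:ℝ)..a, stdNormalPDF t * stdNormalCDF (t + β)) := by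
    funext a
    have h1 := intervalIntegral.integral_Iic_add_Ioi (b := a) (f := fun u => stdNormalPDF u * stdNormalCDF (u + β)) (μ := volume) hint.integrableOn hint.integrableOn
    have h2 := intervalIntegral.integral_Iic_sub_Iic (a := (0:ℝ)) (b := a) (f := fun u => stdNormalPDF u * stdNormalCDF (u + β)) (μ := volume) hint.integrableOn hint.integrableOn
    unfold intI
    linarith
  rw [hrepr]
  have hcont : Continuous (fun u => stdNormalPDF u * stdNormalCDF (u + β)) :=
    pdf_continuous.mul (cdf_continuous.comp (continuous_id.add continuous_const))
  have h := intervalIntegral.integral_hasDerivAt_right (a := (0:ℝ)) (b := α)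
    hint.intervalIntegrable hcont.aestronglyMeasurable.stronglyMeasurableAtFilter
    hcont.continuousAt
  exact (h.const_add _).const_sub _

/-- Key exponential identity. -/
lemma key_identity (μ σ : ℝ) (hσ : 0 < σ) {t : ℝ} (ht : 0 < t) :
    Real.exp (μ + σ ^ 2 / 2) * stdNormalPDF ((Real.log t - μ) / σ - σ)
      = t * stdNormalPDF ((Real.log t - μ) / σ) := by
  set a := (Real.log t - μ) / σ with ha
  have hσa : σ * a = Real.log t - μ := by rw [ha]; field_simp
  have hexp : Real.exp (μ + σ ^ 2 / 2) * Real.exp (-(a - σ) ^ 2 / 2)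
      = Real.exp (σ * a + μ) * Real.exp (-a ^ 2 / 2) := by
    rw [← Real.exp_add, ← Real.exp_add]; congr 1; ring
  have ht' : t = Real.exp (σ * a + μ) := by
    rw [hσa]; rw [show Real.log t - μ + μ = Real.log t by ring, Real.exp_log ht]
  unfold stdNormalPDF
  rw [ht']
  linear_combination (Real.sqrt (2 * Real.pi))⁻¹ * hexp

lemma J_hasDeriv (μ σ : ℝ) (hσ : 0 < σ) {z : ℝ} (hz : 0 < z) :
    HasDerivAt (fun t => intI ((Real.log t - μ) / σ - σ) σ)
      (-(stdNormalPDF ((Real.log z - μ) / σ - σ) * stdNormalCDF ((Real.log z - μ) / σ)) *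
        (z⁻¹ / σ)) z := by
  have hA : HasDerivAt (fun t => (Real.log t - μ) / σ - σ) (z⁻¹ / σ) z :=
    (((Real.hasDerivAt_log hz.ne').sub_const μ).div_const σ).sub_const σ
  have h := (intI_hasDeriv σ ((Real.log z - μ) / σ - σ)).comp z hA
  have harg : (Real.log z - μ) / σ - σ + σ = (Real.log z - μ) / σ := by ring
  rw [harg] at h
  exact h

lemma B_hasDeriv (μ σ : ℝ) (hσ : 0 < σ) {z : ℝ} (hz : 0 < z) :
    HasDerivAt (logNormalCDF (μ + σ ^ 2) σ)
      (stdNormalPDF ((Real.log z - μ) / σ - σ) / (σ * z)) z := by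
  have h := lnc_hasDeriv (μ + σ ^ 2) σ hσ hz
  have harg : (Real.log z - (μ + σ ^ 2)) / σ = (Real.log z - μ) / σ - σ := by
    field_simp; ring
  rwa [harg] at h

/-- Derivative of the RHS expression in the region `t > y` (no max; v = t). -/
lemma G_hasDeriv (μ σ : ℝ) (hσ : 0 < σ) {z : ℝ} (hz : 0 < z) :
    HasDerivAt (fun t => -t * (logNormalCDF μ σ t) ^ 2 + t * (2 * logNormalCDF μ σ t - 1)
        + 2 * Real.exp (μ + σ ^ 2 / 2) *
          (1 - logNormalCDF (μ + σ ^ 2) σ t - intI ((Real.log t - μ) / σ - σ) σ))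
      (-(logNormalCDF μ σ z - 1) ^ 2) z := by
  set a := (Real.log z - μ) / σ with ha
  have hF := lnc_hasDeriv μ σ hσ hz
  have hB := B_hasDeriv μ σ hσ hz
  have hJ := J_hasDeriv μ σ hσ hz
  have h1 : HasDerivAt (fun t => -t * (logNormalCDF μ σ t) ^ 2)
      (-1 * (logNormalCDF μ σ z) ^ 2 +
        -z * (2 * logNormalCDF μ σ z ^ 1 * (stdNormalPDF a / (σ * z)))) z :=
    ((hasDerivAt_id z).neg.mul (hF.pow 2))
  have h2 : HasDerivAt (fun t => t * (2 * logNormalCDF μ σ t - 1))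
      (1 * (2 * logNormalCDF μ σ z - 1) + z * (2 * (stdNormalPDF a / (σ * z)))) z :=
    (hasDerivAt_id z).mul ((hF.const_mul 2).sub_const 1)
  have h3 : HasDerivAt (fun t => 2 * Real.exp (μ + σ ^ 2 / 2) *
      (1 - logNormalCDF (μ + σ ^ 2) σ t - intI ((Real.log t - μ) / σ - σ) σ))
      (2 * Real.exp (μ + σ ^ 2 / 2) *
        (0 - stdNormalPDF (a - σ) / (σ * z) -
          (-(stdNormalPDF (a - σ) * stdNormalCDF a) * (z⁻¹ / σ)))) z :=
    (((hasDerivAt_const z (1:ℝ)).sub hB).sub hJ).const_mul _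
  have h := (h1.add h2).add h3
  refine h.congr_deriv (Eq.symm ?_)
  have hkey := key_identity μ σ hσ hz
  have hFz : logNormalCDF μ σ z = stdNormalCDF a := by rw [lnc_eq hz, ← ha]
  rw [hFz]
  rw [← ha] at hkey
  set E := Real.exp (μ + σ ^ 2 / 2) with hE
  set S := stdNormalCDF a
  set P := stdNormalPDF a
  set Q := stdNormalPDF (a - σ)
  field_simp
  linear_combination (2*(1-S)) * hkey

/-- Derivative of the RHS expression in the region `t < y` (v = y fixed). -/
lemma G2_hasDeriv (μ σ : ℝ) (hσ : 0 < σ) (K1 K2 : ℝ) {z : ℝ} (hz : 0 < z) :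
    HasDerivAt (fun t => -t * (logNormalCDF μ σ t) ^ 2 + K1
        + 2 * Real.exp (μ + σ ^ 2 / 2) * (K2 - intI ((Real.log t - μ) / σ - σ) σ))
      (-(logNormalCDF μ σ z) ^ 2) z := by
  set a := (Real.log z - μ) / σ with ha
  have hF := lnc_hasDeriv μ σ hσ hz
  have hJ := J_hasDeriv μ σ hσ hz
  have h1 : HasDerivAt (fun t => -t * (logNormalCDF μ σ t) ^ 2)
      (-1 * (logNormalCDF μ σ z) ^ 2 +
        -z * (2 * logNormalCDF μ σ z ^ 1 * (stdNormalPDF a / (σ * z)))) z :=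
    ((hasDerivAt_id z).neg.mul (hF.pow 2))
  have h3 : HasDerivAt (fun t => 2 * Real.exp (μ + σ ^ 2 / 2) *
      (K2 - intI ((Real.log t - μ) / σ - σ) σ))
      (2 * Real.exp (μ + σ ^ 2 / 2) *
        (0 - (-(stdNormalPDF (a - σ) * stdNormalCDF a) * (z⁻¹ / σ)))) z :=
    ((hasDerivAt_const z K2).sub hJ).const_mul _
  have h := (h1.add_const K1).add h3
  refine h.congr_deriv (Eq.symm ?_)
  have hkey := key_identity μ σ hσ hz
  have hFz : logNormalCDF μ σ z = stdNormalCDF a := by rw [lnc_eq hz, ← ha]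
  rw [hFz]
  rw [← ha] at hkey
  set E := Real.exp (μ + σ ^ 2 / 2) with hE
  set S := stdNormalCDF a
  set P := stdNormalPDF a
  set Q := stdNormalPDF (a - σ)
  field_simp
  linear_combination (-2*S) * hkey

lemma lnc_measurable (μ σ : ℝ) : Measurable (logNormalCDF μ σ) := by
  unfold logNormalCDF
  exact Measurable.ite (measurableSet_lt measurable_const measurable_id)
    (cdf_continuous.measurable.comp ((Real.measurable_log.sub measurable_const).div_const σ))
    measurable_const

lemma lnc_continuousAt (μ σ : ℝ) (hσ : 0 < σ) {x : ℝ} (hx : 0 < x) :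
    ContinuousAt (logNormalCDF μ σ) x := (lnc_hasDeriv μ σ hσ hx).continuousAt

section main
variable (μ σ : ℝ) (y : ℝ)

noncomputable def gfun (z : ℝ) : ℝ := (logNormalCDF μ σ z - if y ≤ z then (1:ℝ) else 0) ^ 2

lemma g_meas : Measurable (gfun μ σ y) := by
  unfold gfun
  exact ((lnc_measurable μ σ).sub
    (Measurable.ite (measurableSet_le measurable_const measurable_id) measurable_const
      measurable_const)).pow_const 2

lemma g_nonneg (z : ℝ) : 0 ≤ gfun μ σ y z := sq_nonneg _

lemma g_le_one (z : ℝ) : gfun μ σ y z ≤ 1 := by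
  unfold gfun
  have h1 := lnc_nonneg μ σ z
  have h2 := lnc_le_one μ σ z
  split <;> nlinarith

lemma g_integrableOn (hσ : 0 < σ) (hy : 0 < y) {s : ℝ} (hs : 0 < s) :
    IntegrableOn (gfun μ σ y) (Set.Ioi s) := by
  set v := max y s with hv
  have hsv : s ≤ v := le_max_right y s
  have hv0 : 0 < v := lt_of_lt_of_le hy (le_max_left y s)
  have h1 : IntegrableOn (gfun μ σ y) (Set.Ioc s v) := by
    refine Integrable.mono' (integrableOn_const (C := (1:ℝ)) measure_Ioc_lt_top.ne) (g_meas μ σ y).aestronglyMeasurable.restrict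
      (Eventually.of_forall fun z => ?_)
    rw [Real.norm_eq_abs, abs_of_nonneg (g_nonneg μ σ y z)]
    exact g_le_one μ σ y z
  have h2 : IntegrableOn (gfun μ σ y) (Set.Ioi v) := by
    have hdom : IntegrableOn (fun z : ℝ => Real.exp (μ + σ ^ 2 / 2) ^ 2 * z ^ (-2 : ℝ))
        (Set.Ioi v) :=
      (integrableOn_Ioi_rpow_of_lt (by norm_num) hv0).const_mul _
    refine Integrable.mono' hdom (g_meas μ σ y).aestronglyMeasurable.restrict ?_
    rw [ae_restrict_iff' measurableSet_Ioi]
    refine Eventually.of_forall fun z hz => ?_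
    have hz0 : 0 < z := lt_trans hv0 hz
    have hzy : y ≤ z := le_trans (le_max_left y s) (le_of_lt hz)
    rw [Real.norm_eq_abs, abs_of_nonneg (g_nonneg μ σ y z)]
    unfold gfun
    rw [if_pos hzy]
    have hb := lnc_tail μ σ hσ hz0
    have hb0 : 0 ≤ 1 - logNormalCDF μ σ z := by linarith [lnc_le_one μ σ z]
    have : (logNormalCDF μ σ z - 1) ^ 2 = (1 - logNormalCDF μ σ z) ^ 2 := by ring
    rw [this]
    have hrw : z ^ (-2 : ℝ) = (z ^ 2)⁻¹ := by
      rw [show (-2 : ℝ) = -((2:ℕ) : ℝ) by norm_num, Real.rpow_neg hz0.le, Real.rpow_natCast]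
    rw [hrw]
    calc (1 - logNormalCDF μ σ z) ^ 2 ≤ (Real.exp (μ + σ ^ 2 / 2) / z) ^ 2 := by
          exact pow_le_pow_left₀ hb0 hb 2
      _ = Real.exp (μ + σ ^ 2 / 2) ^ 2 * (z ^ 2)⁻¹ := by
          rw [div_pow]; ring
  exact (Ioc_union_Ioi_eq_Ioi hsv) ▸ h1.union h2

lemma L_split (hσ : 0 < σ) (hy : 0 < y) {s t : ℝ} (hs : 0 < s) (hst : s ≤ t) :
    (∫ z in Set.Ioi s, gfun μ σ y z) =
      (∫ z in s..t, gfun μ σ y z) + ∫ z in Set.Ioi t, gfun μ σ y z := by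
  rw [intervalIntegral.integral_of_le hst,
    ← setIntegral_union (Ioc_disjoint_Ioi le_rfl) measurableSet_Ioi
      ((g_integrableOn μ σ y hσ hy hs).mono_set Ioc_subset_Ioi_self)
      (g_integrableOn μ σ y hσ hy (lt_of_lt_of_le hs hst)),
    Ioc_union_Ioi_eq_Ioi hst]

lemma L_tendsto (hσ : 0 < σ) (hy : 0 < y) :
    Tendsto (fun s => ∫ z in Set.Ioi s, gfun μ σ y z) atTop (𝓝 0) := by
  have hint := g_integrableOn μ σ y hσ hy hy
  have h1 : Tendsto (fun s => ∫ z in y..s, gfun μ σ y z) atTop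
      (𝓝 (∫ z in Set.Ioi y, gfun μ σ y z)) :=
    intervalIntegral_tendsto_integral_Ioi y hint tendsto_id
  have h2 : Tendsto (fun s => (∫ z in Set.Ioi y, gfun μ σ y z) - ∫ z in y..s, gfun μ σ y z)
      atTop (𝓝 0) := by
    have := tendsto_const_nhds (x := ∫ z in Set.Ioi y, gfun μ σ y z) (f := atTop (α := ℝ))
    simpa using this.sub h1
  refine h2.congr' ?_
  filter_upwards [eventually_ge_atTop y] with s hs
  have := L_split μ σ y hσ hy hy hs
  linarith

noncomputable def Gfun (t : ℝ) : ℝ :=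
  -t * (logNormalCDF μ σ t) ^ 2 + t * (2 * logNormalCDF μ σ t - 1)
    + 2 * Real.exp (μ + σ ^ 2 / 2) *
      (1 - logNormalCDF (μ + σ ^ 2) σ t - intI ((Real.log t - μ) / σ - σ) σ)

lemma G_tendsto (hσ : 0 < σ) : Tendsto (Gfun μ σ) atTop (𝓝 0) := by
  have hT1 : Tendsto (fun t : ℝ => t * (1 - logNormalCDF μ σ t) ^ 2) atTop (𝓝 0) := by
    refine squeeze_zero' (g := fun t : ℝ => Real.exp (μ + σ ^ 2 / 2) ^ 2 / t) ?_ ?_ ?_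
    · filter_upwards [eventually_gt_atTop 0] with t ht
      have := lnc_le_one μ σ t
      nlinarith
    · filter_upwards [eventually_gt_atTop 0] with t ht
      have hb := lnc_tail μ σ hσ ht
      have hb0 : 0 ≤ 1 - logNormalCDF μ σ t := by linarith [lnc_le_one μ σ t]
      calc t * (1 - logNormalCDF μ σ t) ^ 2
          ≤ t * (Real.exp (μ + σ ^ 2 / 2) / t) ^ 2 :=
            mul_le_mul_of_nonneg_left (pow_le_pow_left₀ hb0 hb 2) ht.le
        _ = Real.exp (μ + σ ^ 2 / 2) ^ 2 / t := by field_simp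
    · exact tendsto_const_nhds.div_atTop tendsto_id
  have hT2 : Tendsto (fun t : ℝ => 1 - logNormalCDF (μ + σ ^ 2) σ t) atTop (𝓝 0) := by
    refine squeeze_zero' (g := fun t : ℝ => Real.exp ((μ + σ ^ 2) + σ ^ 2 / 2) / t) ?_ ?_ ?_
    · exact Eventually.of_forall fun t => by linarith [lnc_le_one (μ + σ ^ 2) σ t]
    · filter_upwards [eventually_gt_atTop 0] with t ht
      exact lnc_tail (μ + σ ^ 2) σ hσ ht
    · exact tendsto_const_nhds.div_atTop tendsto_id
  have hAtop : Tendsto (fun t : ℝ => (Real.log t - μ) / σ - σ) atTop atTop := by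
    have h1 : Tendsto (fun t : ℝ => Real.log t - μ) atTop atTop := by
      have := tendsto_atTop_add_const_right atTop (-μ) Real.tendsto_log_atTop
      simpa [sub_eq_add_neg] using this
    have h2 : Tendsto (fun t : ℝ => (Real.log t - μ) / σ) atTop atTop :=
      h1.atTop_div_const hσ
    have := tendsto_atTop_add_const_right atTop (-σ) h2
    simpa [sub_eq_add_neg] using this
  have hT3 : Tendsto (fun t : ℝ => intI ((Real.log t - μ) / σ - σ) σ) atTop (𝓝 0) := by
    refine squeeze_zero' (g := fun t : ℝ =>
        Real.exp ((1:ℝ) ^ 2 / 2) * Real.exp (-((Real.log t - μ) / σ - σ)))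
      (Eventually.of_forall fun t => intI_nonneg _ _) ?_ ?_
    · refine Eventually.of_forall fun t => (intI_le _ _).trans ?_
      have := cdf_tail 1 ((Real.log t - μ) / σ - σ) one_pos
      simpa using this
    · have hexp : Tendsto (fun t : ℝ => Real.exp (-((Real.log t - μ) / σ - σ))) atTop (𝓝 0) :=
        Real.tendsto_exp_atBot.comp (tendsto_neg_atTop_atBot.comp hAtop)
      have := hexp.const_mul (Real.exp ((1:ℝ) ^ 2 / 2))
      simpa using this
  have hG : Gfun μ σ = fun t =>
      -(t * (1 - logNormalCDF μ σ t) ^ 2) + 2 * Real.exp (μ + σ ^ 2 / 2) *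
        ((1 - logNormalCDF (μ + σ ^ 2) σ t) - intI ((Real.log t - μ) / σ - σ) σ) := by
    funext t; unfold Gfun; ring
  rw [hG]
  have := (hT1.neg).add (((hT2.sub hT3)).const_mul (2 * Real.exp (μ + σ ^ 2 / 2)))
  simpa using this

end main

section final
variable (μ σ : ℝ) (y : ℝ)

lemma L_eq_G (hσ : 0 < σ) (hy : 0 < y) {s : ℝ} (hs : y ≤ s) :
    (∫ z in Set.Ioi s, gfun μ σ y z) = Gfun μ σ s := by
  have hs0 : 0 < s := lt_of_lt_of_le hy hs
  have hconst : ∀ t, s ≤ t →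
      (∫ z in Set.Ioi s, gfun μ σ y z) - Gfun μ σ s
        = (∫ z in Set.Ioi t, gfun μ σ y z) - Gfun μ σ t := by
    intro t hst
    have hFTC : ∫ z in s..t, -(logNormalCDF μ σ z - 1) ^ 2 = Gfun μ σ t - Gfun μ σ s := by
      refine intervalIntegral.integral_eq_sub_of_hasDeriv_right_of_le hst ?_ ?_ ?_
      · intro z hz
        exact ((G_hasDeriv μ σ hσ (lt_of_lt_of_le hs0 hz.1)).continuousAt).continuousWithinAt
      · intro z hz
        exact (G_hasDeriv μ σ hσ (lt_trans hs0 hz.1)).hasDerivWithinAt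
      · refine ContinuousOn.intervalIntegrable ?_
        intro z hz
        rw [uIcc_of_le hst] at hz
        exact (((lnc_continuousAt μ σ hσ (lt_of_lt_of_le hs0 hz.1)).sub
          continuousAt_const).pow 2).neg.continuousWithinAt
    have hgint : ∫ z in s..t, gfun μ σ y z = ∫ z in s..t, (logNormalCDF μ σ z - 1) ^ 2 := by
      refine intervalIntegral.integral_congr fun z hz => ?_
      rw [uIcc_of_le hst] at hz
      unfold gfun
      rw [if_pos (le_trans hs hz.1)]
    have hsplit := L_split μ σ y hσ hy hs0 hst
    have hneg : ∫ z in s..t, (logNormalCDF μ σ z - 1) ^ 2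
        = - ∫ z in s..t, -(logNormalCDF μ σ z - 1) ^ 2 := by
      rw [intervalIntegral.integral_neg]; ring
    rw [hgint, hneg, hFTC] at hsplit
    linarith
  have hev : (fun _ : ℝ => (∫ z in Set.Ioi s, gfun μ σ y z) - Gfun μ σ s)
      =ᶠ[atTop] fun t => (∫ z in Set.Ioi t, gfun μ σ y z) - Gfun μ σ t := by
    filter_upwards [eventually_ge_atTop s] with t ht using hconst t ht
  have h0 := (L_tendsto μ σ y hσ hy).sub (G_tendsto μ σ hσ)
  have hz : (∫ z in Set.Ioi s, gfun μ σ y z) - Gfun μ σ s = 0 - 0 :=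
    tendsto_nhds_unique (Tendsto.congr' hev tendsto_const_nhds) h0
  linarith

theorem twCRPS_logNormal' (hσ : 0 < σ)
    (τ : ℝ) (hτ : 0 < τ) (hy : 0 < y) :
    twCRPS (logNormalCDF μ σ) τ y =
      -τ * (logNormalCDF μ σ τ) ^ 2
        + max y τ * (2 * logNormalCDF μ σ (max y τ) - 1)
        + 2 * Real.exp (μ + σ ^ 2 / 2) *
          (1 - logNormalCDF (μ + σ ^ 2) σ (max y τ)
            - intI ((Real.log τ - μ) / σ - σ) σ) := by
  have hL : twCRPS (logNormalCDF μ σ) τ y = ∫ z in Set.Ioi τ, gfun μ σ y z := rfl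
  rcases le_or_gt y τ with hcase | hcase
  · rw [hL, max_eq_right hcase, L_eq_G μ σ y hσ hy hcase]
    unfold Gfun
    ring
  · rw [hL, max_eq_left hcase.le]
    have hτy : τ ≤ y := hcase.le
    set G2 : ℝ → ℝ := fun t => -t * (logNormalCDF μ σ t) ^ 2
        + y * (2 * logNormalCDF μ σ y - 1)
        + 2 * Real.exp (μ + σ ^ 2 / 2) *
          ((1 - logNormalCDF (μ + σ ^ 2) σ y) - intI ((Real.log t - μ) / σ - σ) σ) with hG2
    have hFTC : ∫ z in τ..y, -(logNormalCDF μ σ z) ^ 2 = G2 y - G2 τ := by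
      refine intervalIntegral.integral_eq_sub_of_hasDeriv_right_of_le hτy ?_ ?_ ?_
      · intro z hz
        exact ((G2_hasDeriv μ σ hσ _ _ (lt_of_lt_of_le hτ hz.1)).continuousAt).continuousWithinAt
      · intro z hz
        exact (G2_hasDeriv μ σ hσ _ _ (lt_trans hτ hz.1)).hasDerivWithinAt
      · refine ContinuousOn.intervalIntegrable ?_
        intro z hz
        rw [uIcc_of_le hτy] at hz
        exact ((lnc_continuousAt μ σ hσ (lt_of_lt_of_le hτ hz.1)).pow 2).neg.continuousWithinAt
    have hgint : ∫ z in τ..y, gfun μ σ y z = ∫ z in τ..y, (logNormalCDF μ σ z) ^ 2 := by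
      refine intervalIntegral.integral_congr_ae ?_
      have hne : ∀ᵐ z : ℝ, z ≠ y := by
        rw [ae_iff]
        simp [measure_singleton y]
      filter_upwards [hne] with z hzne hzI
      rw [uIoc_of_le hτy] at hzI
      have : ¬ y ≤ z := not_le.2 (lt_of_le_of_ne hzI.2 hzne)
      unfold gfun
      rw [if_neg this, sub_zero]
    have hsplit := L_split μ σ y hσ hy hτ hτy
    have hLy := L_eq_G μ σ y hσ hy (le_refl y)
    have hGy : Gfun μ σ y = G2 y := by rw [hG2]; unfold Gfun; ring
    have hneg : ∫ z in τ..y, (logNormalCDF μ σ z) ^ 2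
        = - ∫ z in τ..y, -(logNormalCDF μ σ z) ^ 2 := by
      rw [intervalIntegral.integral_neg]; ring
    have : (∫ z in Set.Ioi τ, gfun μ σ y z) = G2 τ := by
      rw [hsplit, hgint, hneg, hFTC, hLy, hGy]; ring
    rw [this, hG2]
end final


theorem twCRPS_logNormal (μ σ : ℝ) (hσ : 0 < σ)
    (τ y : ℝ) (hτ : 0 < τ) (hy : 0 < y) :
    twCRPS (logNormalCDF μ σ) τ y =
      -τ * (logNormalCDF μ σ τ) ^ 2
        + max y τ * (2 * logNormalCDF μ σ (max y τ) - 1)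
        + 2 * Real.exp (μ + σ ^ 2 / 2) *
          (1 - logNormalCDF (μ + σ ^ 2) σ (max y τ)
            - intI ((Real.log τ - μ) / σ - σ) σ) :=
  twCRPS_logNormal' μ σ y hσ τ hτ hy
end
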